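/- Let X be unit lower triangular and Y unit lower triangular 2×2 complex matrices with X = F Y^{-*} F, where F is the flip matrix. If FX = QR and Y = PS are QR decompositions with R, S upper triangular having positive real diagonal entries, then Q = PF. -/

import Mathlib

open Matrix


lemma unit_pos_real_eq_one (z w : ℂ) (hw0 : w.im = 0) (hwp : 0 < w.re)
    (hzw : z * w = 1) (hu : (starRingEnd ℂ) z * z = 1) : z = 1 := by
  have h1 := congrArg Complex.im hzw
  have h2 := congrArg Complex.re hzw
  simp [Complex.mul_im, Complex.mul_re, hw0] at h1 h2
  have him : z.im = 0 := by
    rcases h1 with h | h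
    · exact h
    · exact absurd h hwp.ne'
  have hre : 0 < z.re := by nlinarith
  have h3 := congrArg Complex.re hu
  simp [Complex.mul_re, him] at h3
  have : z.re = 1 := by nlinarith
  exact Complex.ext this him

/-- If `X`, `Y` are unit lower triangular 2×2 matrices with `X = F Y⁻ᴴ F`, and
`FX = QR`, `Y = PS` are QR decompositions (with `Q`, `P` unitary and `R`, `S` upper
triangular with positive real diagonal entries), then `Q = PF`. -/
theorem qr_factors_related
    (x y : ℂ)
    (F : Matrix (Fin 2) (Fin 2) ℂ) (hF : F = !![(0 : ℂ), 1; 1, 0])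
    (X Y : Matrix (Fin 2) (Fin 2) ℂ)
    (hX : X = !![(1 : ℂ), 0; x, 1]) (hY : Y = !![(1 : ℂ), 0; y, 1])
    (hXY : X = F * (Y⁻¹)ᴴ * F)
    (Q P R S : Matrix (Fin 2) (Fin 2) ℂ)
    (hQ : Q ∈ Matrix.unitaryGroup (Fin 2) ℂ)
    (hP : P ∈ Matrix.unitaryGroup (Fin 2) ℂ)
    (hRtri : R 1 0 = 0) (hStri : S 1 0 = 0)
    (hRdiag : ∀ i : Fin 2, (R i i).im = 0 ∧ 0 < (R i i).re)
    (hSdiag : ∀ i : Fin 2, (S i i).im = 0 ∧ 0 < (S i i).re)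
    (hQR : F * X = Q * R) (hPS : Y = P * S) :
    Q = P * F := by
  -- nonzero diagonal entries
  have hμ : S 0 0 ≠ 0 := by intro h; have := (hSdiag 0).2; rw [h] at this; simp at this
  have hlm : S 1 1 ≠ 0 := by intro h; have := (hSdiag 1).2; rw [h] at this; simp at this
  have hρ : R 0 0 ≠ 0 := by intro h; have := (hRdiag 0).2; rw [h] at this; simp at this
  have hσ : R 1 1 ≠ 0 := by intro h; have := (hRdiag 1).2; rw [h] at this; simp at this
  have hcμ : (starRingEnd ℂ) (S 0 0) = S 0 0 := Complex.conj_eq_iff_im.2 (hSdiag 0).1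
  have hclm : (starRingEnd ℂ) (S 1 1) = S 1 1 := Complex.conj_eq_iff_im.2 (hSdiag 1).1
  -- F * F = 1
  have hFF : F * F = 1 := by
    subst hF
    rw [Matrix.mul_fin_two, Matrix.one_fin_two]; norm_num
  -- explicit inverse of Y
  have hYinv : Y⁻¹ = !![(1 : ℂ), 0; -y, 1] := by
    apply Matrix.inv_eq_right_inv
    rw [hY, Matrix.mul_fin_two, Matrix.one_fin_two]; norm_num
  -- S as an explicit matrix
  have hSeta : S = !![S 0 0, S 0 1; 0, S 1 1] := by
    rw [← hStri]; exact Matrix.eta_fin_two S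
  -- explicit inverse of Sᴴ
  have hSHinv : (Sᴴ)⁻¹ =
      !![(S 0 0)⁻¹, 0; -(starRingEnd ℂ) (S 0 1) * ((S 0 0) * (S 1 1))⁻¹, (S 1 1)⁻¹] := by
    apply Matrix.inv_eq_right_inv
    rw [hSeta]
    rw [show (!![S 0 0, S 0 1; 0, S 1 1])ᴴ
        = !![(starRingEnd ℂ) (S 0 0), 0; (starRingEnd ℂ) (S 0 1), (starRingEnd ℂ) (S 1 1)] by
      ext i j; fin_cases i <;> fin_cases j <;> simp [Matrix.conjTranspose_apply]]
    rw [Matrix.mul_fin_two, Matrix.one_fin_two, hcμ, hclm]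
    congr 1 <;> simp [hμ, hlm] <;> field_simp <;> ring
  -- P⁻¹ = Pᴴ
  have hPinv : P⁻¹ = Pᴴ := Matrix.inv_eq_right_inv (Matrix.mem_unitaryGroup_iff.mp hP)
  have hPP : Pᴴ * P = 1 := hP.1
  have hQQ : Qᴴ * Q = 1 := hQ.1
  -- key equation
  have hKey : (Pᴴ * Q) * R = (Sᴴ)⁻¹ * F := by
    have h1 : F * X = P * ((Sᴴ)⁻¹ * F) := by
      rw [hXY, ← Matrix.mul_assoc, ← Matrix.mul_assoc, hFF, Matrix.one_mul]
      have h2 : (Y⁻¹)ᴴ = P * (Sᴴ)⁻¹ := by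
        rw [hPS, Matrix.mul_inv_rev, hPinv, Matrix.conjTranspose_mul,
          Matrix.conjTranspose_conjTranspose, Matrix.conjTranspose_nonsing_inv]
      rw [h2, Matrix.mul_assoc]
    rw [Matrix.mul_assoc, ← hQR, h1, ← Matrix.mul_assoc, hPP, Matrix.one_mul]
  -- unitarity of M := Pᴴ * Q
  have hPPt : P * Pᴴ = 1 := hP.2
  have hMunit : (Pᴴ * Q)ᴴ * (Pᴴ * Q) = 1 := by
    rw [Matrix.conjTranspose_mul, Matrix.conjTranspose_conjTranspose,
      Matrix.mul_assoc, ← Matrix.mul_assoc P, hPPt, Matrix.one_mul, hQQ]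
  -- eta expansions
  have hReta : R = !![R 0 0, R 0 1; 0, R 1 1] := by
    rw [← hRtri]; exact Matrix.eta_fin_two R
  have hMeta : Pᴴ * Q = !![(Pᴴ*Q) 0 0, (Pᴴ*Q) 0 1; (Pᴴ*Q) 1 0, (Pᴴ*Q) 1 1] :=
    Matrix.eta_fin_two _
  rw [hMeta, hReta, hSHinv, hF, Matrix.mul_fin_two, Matrix.mul_fin_two] at hKey
  have e := fun i j => congrFun (congrFun hKey i) j
  have e00 := e 0 0; have e01 := e 0 1; have e10 := e 1 0
  simp at e00 e01 e10
  rw [hMeta] at hMunit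
  rw [show (!![(Pᴴ*Q) 0 0, (Pᴴ*Q) 0 1; (Pᴴ*Q) 1 0, (Pᴴ*Q) 1 1])ᴴ
      = !![(starRingEnd ℂ) ((Pᴴ*Q) 0 0), (starRingEnd ℂ) ((Pᴴ*Q) 1 0);
           (starRingEnd ℂ) ((Pᴴ*Q) 0 1), (starRingEnd ℂ) ((Pᴴ*Q) 1 1)] by
    ext i j; fin_cases i <;> fin_cases j <;> simp [Matrix.conjTranspose_apply]] at hMunit
  rw [Matrix.mul_fin_two, Matrix.one_fin_two] at hMunit
  have u := fun i j => congrFun (congrFun hMunit i) j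
  have u00 := u 0 0; have u01 := u 0 1; have u11 := u 1 1
  simp at u00 u01 u11
  -- m00 = 0
  have hm00 : (Pᴴ*Q) 0 0 = 0 := by
    rcases e00 with h | h
    · exact h
    · exact absurd h hρ
  -- m10 = 1
  have hm10 : (Pᴴ*Q) 1 0 = 1 := by
    apply unit_pos_real_eq_one _ (S 1 1 * R 0 0)
    · simp [Complex.mul_im, (hSdiag 1).1, (hRdiag 0).1]
    · have := (hSdiag 1).2; have := (hRdiag 0).2
      simp [Complex.mul_re, (hSdiag 1).1, (hRdiag 0).1]; positivity
    · field_simp at e10; linear_combination e10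
    · have := u00; rw [hm00] at this; simpa using this
  -- m11 = 0
  have hm11 : (Pᴴ*Q) 1 1 = 0 := by
    rw [hm00, hm10] at u01
    simpa using u01
  -- m01 = 1
  have hm01 : (Pᴴ*Q) 0 1 = 1 := by
    apply unit_pos_real_eq_one _ (S 0 0 * R 1 1)
    · simp [Complex.mul_im, (hSdiag 0).1, (hRdiag 1).1]
    · have := (hSdiag 0).2; have := (hRdiag 1).2
      simp [Complex.mul_re, (hSdiag 0).1, (hRdiag 1).1]; positivity
    · rw [hm00] at e01; field_simp at e01; linear_combination e01
    · rw [hm11] at u11; simpa using u11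
  -- conclude
  have hMF : Pᴴ * Q = F := by
    rw [hMeta, hm00, hm01, hm10, hm11, hF]
  calc Q = (P * Pᴴ) * Q := by rw [hPPt, Matrix.one_mul]
    _ = P * (Pᴴ * Q) := by rw [Matrix.mul_assoc]
    _ = P * F := by rw [hMF]
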